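/- For every decreasing rule δ ∈ {π⁻, 𝔣4}, every rule μ ∈ {π⁺, λ, J}, and all modal trees T, S: if T rewrites to S by one δ-step followed by one μ-step, then T rewrites to S by finitely many (possibly zero) μ-steps followed by finitely many (possibly zero) steps by decreasing rules. -/

import Mathlib

namespace TRC

/-- Strictly positive formulas of `L⁺`. -/
inductive SPF : Type where
  | top : SPF
  | var : ℕ → SPF
  | dia : ℕ → SPF → SPF
  | and : SPF → SPF → SPF

/-- The sequent system `K⁺`. -/
inductive KPlus : SPF → SPF → Prop where
  | id (φ) : KPlus φ φ
  | topI (φ) : KPlus φ .top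
  | cut {φ ψ χ} : KPlus φ ψ → KPlus ψ χ → KPlus φ χ
  | andE₁ (φ ψ) : KPlus (.and φ ψ) φ
  | andE₂ (φ ψ) : KPlus (.and φ ψ) ψ
  | andI {φ ψ χ} : KPlus φ ψ → KPlus φ χ → KPlus φ (.and ψ χ)
  | dist {φ ψ} (α) : KPlus φ ψ → KPlus (.dia α φ) (.dia α ψ)

/-- The Reflection Calculus `RC`. -/
inductive RC : SPF → SPF → Prop where
  | id (φ) : RC φ φ
  | topI (φ) : RC φ .top
  | cut {φ ψ χ} : RC φ ψ → RC ψ χ → RC φ χ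
  | andE₁ (φ ψ) : RC (.and φ ψ) φ
  | andE₂ (φ ψ) : RC (.and φ ψ) ψ
  | andI {φ ψ χ} : RC φ ψ → RC φ χ → RC φ (.and ψ χ)
  | dist {φ ψ} (α) : RC φ ψ → RC (.dia α φ) (.dia α ψ)
  | trans (α φ) : RC (.dia α (.dia α φ)) (.dia α φ)
  | mono {α β} (φ) : β < α → RC (.dia α φ) (.dia β φ)
  | jax {α β} (φ ψ) : β < α → RC (.and (.dia α φ) (.dia β ψ)) (.dia α (.and φ (.dia β ψ)))

/-- Modal depth. -/
def SPF.md : SPF → ℕ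
  | .top => 0
  | .var _ => 0
  | .dia _ φ => φ.md + 1
  | .and φ ψ => max φ.md ψ.md

/-- Modal trees. -/
inductive MTree : Type where
  | node : List ℕ → List (ℕ × MTree) → MTree

/-- Sum of modal trees. -/
def MTree.sum : MTree → MTree → MTree
  | .node Δ₁ Γ₁, .node Δ₂ Γ₂ => .node (Δ₁ ++ Δ₂) (Γ₁ ++ Γ₂)

mutual
/-- Height of a modal tree. -/
def MTree.height : MTree → ℕ
  | .node _ Γ => heightL Γ
def heightL : List (ℕ × MTree) → ℕ
  | [] => 0
  | (_, S) :: Γ => max (S.height + 1) (heightL Γ)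
end

mutual
/-- `T.IsPos k`: the (1-indexed) string `k` is a position of `T`. -/
def MTree.IsPos : MTree → List ℕ → Prop
  | _, [] => True
  | .node _ Γ, i :: k => isPosL Γ i k
def isPosL : List (ℕ × MTree) → ℕ → List ℕ → Prop
  | [], _, _ => False
  | _ :: _, 0, _ => False
  | (_, S) :: _, 1, k => S.IsPos k
  | _ :: Γ, n+2, k => isPosL Γ (n+1) k
end

mutual
/-- Subtree of `T` at position `k` (returning a default junk value off positions). -/
def MTree.subtree : MTree → List ℕ → MTree
  | T, [] => T
  | .node Δ Γ, i :: k => subtreeL (.node Δ Γ) Γ i k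
def subtreeL : MTree → List (ℕ × MTree) → ℕ → List ℕ → MTree
  | d, [], _, _ => d
  | d, _ :: _, 0, _ => d
  | _, (_, S) :: _, 1, k => S.subtree k
  | d, _ :: Γ, n+2, k => subtreeL d Γ (n+1) k
end

mutual
/-- `T.replace S k`: replace the subtree of `T` at position `k` by `S`. -/
def MTree.replace : MTree → MTree → List ℕ → MTree
  | _, S, [] => S
  | .node Δ Γ, S, i :: k => .node Δ (replaceL Γ S i k)
def replaceL : List (ℕ × MTree) → MTree → ℕ → List ℕ → List (ℕ × MTree)
  | [], _, _, _ => []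
  | Γ, _, 0, _ => Γ
  | (α, C) :: Γ, S, 1, k => (α, C.replace S k) :: Γ
  | x :: Γ, S, n+2, k => x :: replaceL Γ S (n+1) k
end

/-- Names of the eight rewriting rules of TRC. -/
inductive Rule : Type where
  | rhoP | rhoM | sigma | piP | piM | four | lam | jay
  deriving DecidableEq

/-- One rewriting step performed at the root. -/
inductive RootStep : Rule → MTree → MTree → Prop where
  | rhoP {Δ Γ i p} (hi : 1 ≤ i) (h : Δ[i-1]? = some p) :
      RootStep .rhoP (.node Δ Γ) (.node (p :: Δ) Γ)
  | rhoM {Δ Γ i} (hi : 1 ≤ i) (h : i - 1 < Δ.length) :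
      RootStep .rhoM (.node Δ Γ) (.node (Δ.eraseIdx (i-1)) Γ)
  | sigma {Δ Γ i j x y} (hi : 1 ≤ i) (hj : 1 ≤ j) (hij : i ≠ j)
      (hx : Γ[i-1]? = some x) (hy : Γ[j-1]? = some y) :
      RootStep .sigma (.node Δ Γ) (.node Δ ((Γ.set (j-1) x).set (i-1) y))
  | piP {Δ Γ i x} (hi : 1 ≤ i) (hx : Γ[i-1]? = some x) :
      RootStep .piP (.node Δ Γ) (.node Δ (x :: Γ))
  | piM {Δ Γ i} (hi : 1 ≤ i) (h : i - 1 < Γ.length) :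
      RootStep .piM (.node Δ Γ) (.node Δ (Γ.eraseIdx (i-1)))
  | four {Δ Γ i j β Δt Γt S} (hi : 1 ≤ i) (hj : 1 ≤ j)
      (hΓ : Γ[i-1]? = some (β, MTree.node Δt Γt)) (hΓt : Γt[j-1]? = some (β, S)) :
      RootStep .four (.node Δ Γ) (.node Δ (Γ.set (i-1) (β, S)))
  | lam {Δ Γ i α β S} (hi : 1 ≤ i) (hβ : β < α) (hΓ : Γ[i-1]? = some (α, S)) :
      RootStep .lam (.node Δ Γ) (.node Δ (Γ.set (i-1) (β, S)))
  | jay {Δ Γ i j α β Δt Γt S} (hi : 1 ≤ i) (hj : 1 ≤ j) (hij : i ≠ j) (hβ : β < α)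
      (hΓi : Γ[i-1]? = some (α, MTree.node Δt Γt)) (hΓj : Γ[j-1]? = some (β, S)) :
      RootStep .jay (.node Δ Γ)
        (.node Δ ((Γ.set (i-1) (α, MTree.node Δt (Γt ++ [(β, S)]))).eraseIdx (j-1)))

/-- One step of the rule `r`, applied at some position. -/
def StepR (r : Rule) (T T' : MTree) : Prop :=
  ∃ k S, T.IsPos k ∧ RootStep r (T.subtree k) S ∧ T' = T.replace S k

/-- One step of the rewriting relation `↪`. -/
def Step (T T' : MTree) : Prop := ∃ r, StepR r T T'

/-- The rewriting relation `↪*`. -/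
def Steps : MTree → MTree → Prop := Relation.ReflTransGen Step

/-- TRC-equivalence `↔*`. -/
def TEquiv (T T' : MTree) : Prop := Steps T T' ∧ Steps T' T

/-- `T ↪^Ω S` : rewriting applying the rules of `Ω` in order, one step each. -/
inductive StepsOf : List Rule → MTree → MTree → Prop where
  | nil (T) : StepsOf [] T T
  | cons {r Ω T U S} : StepR r T U → StepsOf Ω U S → StepsOf (r :: Ω) T S

def AtomicStep (T S : MTree) : Prop := StepR .rhoP T S ∨ StepR .rhoM T S
def DecreasingStep (T S : MTree) : Prop := StepR .piM T S ∨ StepR .four T S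
def ModalStep (T S : MTree) : Prop := StepR .lam T S ∨ StepR .jay T S

/-- Finite conjunctions (empty conjunction is `⊤`). -/
def bigAnd : List SPF → SPF
  | [] => .top
  | φ :: l => .and φ (bigAnd l)

mutual
/-- The embedding `ℱ` of modal trees into formulas. -/
def MTree.toFormula : MTree → SPF
  | .node Δ Γ => .and (bigAnd (Δ.map SPF.var)) (diamL Γ)
def diamL : List (ℕ × MTree) → SPF
  | [] => .top
  | (α, S) :: Γ => .and (.dia α S.toFormula) (diamL Γ)
end

/-- The embedding `𝒯` of formulas into modal trees. -/
def SPF.toTree : SPF → MTree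
  | .top => .node [] []
  | .var p => .node [p] []
  | .dia α φ => .node [] [(α, φ.toTree)]
  | .and φ ψ => φ.toTree.sum ψ.toTree

/-- Nonempty conjunction `φ₁ ∧ (φ₂ ∧ (… ∧ φₙ))`. -/
def conjNE : SPF → List SPF → SPF
  | φ, [] => φ
  | φ, ψ :: l => .and φ (conjNE ψ l)

end TRC

namespace TRC2
open List

variable {X : Type*}

theorem getElem?_split {l : List X} {n : ℕ} {a : X} (h : l[n]? = some a) :
    ∃ l₁ l₂, l = l₁ ++ a :: l₂ ∧ l₁.length = n := by
  induction l generalizing n with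
  | nil => simp at h
  | cons x l ih =>
    cases n with
    | zero =>
      simp only [List.getElem?_cons_zero, Option.some.injEq] at h
      exact ⟨[], l, by simp [h], rfl⟩
    | succ n =>
      simp only [List.getElem?_cons_succ] at h
      obtain ⟨l₁, l₂, rfl, rfl⟩ := ih h
      exact ⟨x :: l₁, l₂, rfl, by simp⟩

theorem getElem?_mid (l₁ : List X) (a : X) (l₂ : List X) :
    (l₁ ++ a :: l₂)[l₁.length]? = some a := by
  induction l₁ with
  | nil => simp
  | cons x l ih => simpa using ih

theorem set_mid (l₁ : List X) (a b : X) (l₂ : List X) :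
    (l₁ ++ a :: l₂).set l₁.length b = l₁ ++ b :: l₂ := by
  induction l₁ with
  | nil => simp
  | cons x l ih => simpa using ih

theorem eraseIdx_mid (l₁ : List X) (a : X) (l₂ : List X) :
    (l₁ ++ a :: l₂).eraseIdx l₁.length = l₁ ++ l₂ := by
  induction l₁ with
  | nil => simp
  | cons x l ih => simpa using ih

/-- Two marked positions in a list. -/
theorem two_pos {l₁ l₂ m₁ m₂ : List X} {a b : X} (h : l₁ ++ a :: l₂ = m₁ ++ b :: m₂) :
    (l₁ = m₁ ∧ a = b ∧ l₂ = m₂) ∨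
    (∃ c, m₁ = l₁ ++ a :: c ∧ l₂ = c ++ b :: m₂) ∨
    (∃ c, l₁ = m₁ ++ b :: c ∧ m₂ = c ++ a :: l₂) := by
  rcases List.append_eq_append_iff.1 h with ⟨c, rfl, hc⟩ | ⟨c, rfl, hc⟩
  · cases c with
    | nil => simp_all
    | cons x c => right; left; injection hc with h1 h2; exact ⟨c, by rw [h1], h2⟩
  · cases c with
    | nil => simp_all
    | cons x c => right; right; injection hc with h1 h2; exact ⟨c, by rw [h1], h2⟩

/-- A marked position in a concatenation. -/
theorem split_append {g₁ g₂ m₁ m₂ : List X} {b : X} (h : g₁ ++ g₂ = m₁ ++ b :: m₂) :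
    (∃ c, g₁ = m₁ ++ b :: c ∧ m₂ = c ++ g₂) ∨
    (∃ c, g₂ = c ++ b :: m₂ ∧ m₁ = g₁ ++ c) := by
  rcases List.append_eq_append_iff.1 h with ⟨c, rfl, hc⟩ | ⟨c, rfl, hc⟩
  · exact Or.inr ⟨c, hc, rfl⟩
  · cases c with
    | nil => exact Or.inr ⟨[], by simpa using hc.symm, by simp⟩
    | cons x c => injection hc with h1 h2; exact Or.inl ⟨c, by rw [h1], h2⟩



theorem two_getElem? {X : Type*} {l : List X} {m n : ℕ} {a b : X} (hmn : m < n)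
    (ha : l[m]? = some a) (hb : l[n]? = some b) :
    ∃ l₁ l₂ l₃, l = l₁ ++ a :: (l₂ ++ b :: l₃) ∧ l₁.length = m ∧ m + l₂.length + 1 = n := by
  obtain ⟨l₁, l₂', rfl, rfl⟩ := getElem?_split ha
  rw [List.getElem?_append_right (by omega)] at hb
  obtain ⟨k, hk⟩ : ∃ k, n - l₁.length = k + 1 := ⟨n - l₁.length - 1, by omega⟩
  rw [hk, List.getElem?_cons_succ] at hb
  obtain ⟨l₂, l₃, rfl, rfl⟩ := getElem?_split hb
  exact ⟨l₁, l₂, l₃, rfl, rfl, by omega⟩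

theorem set_erase_calc1 {X : Type*} (l₁ l₂ l₃ : List X) (x v b : X) :
    ((l₁ ++ x :: (l₂ ++ b :: l₃)).set l₁.length v).eraseIdx (l₁.length + l₂.length + 1)
      = l₁ ++ v :: (l₂ ++ l₃) := by
  rw [set_mid]
  have h2 : l₁ ++ v :: (l₂ ++ b :: l₃) = (l₁ ++ v :: l₂) ++ b :: l₃ := by simp
  have h3 : l₁.length + l₂.length + 1 = (l₁ ++ v :: l₂).length := by simp; omega
  rw [h2, h3, eraseIdx_mid]; simp

theorem set_erase_calc2 {X : Type*} (l₁ l₂ l₃ : List X) (x v b : X) :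
    ((l₁ ++ b :: (l₂ ++ x :: l₃)).set (l₁.length + l₂.length + 1) v).eraseIdx l₁.length
      = l₁ ++ (l₂ ++ v :: l₃) := by
  have h1 : l₁ ++ b :: (l₂ ++ x :: l₃) = (l₁ ++ b :: l₂) ++ x :: l₃ := by simp
  have h3 : l₁.length + l₂.length + 1 = (l₁ ++ b :: l₂).length := by simp; omega
  rw [h1, h3, set_mid]
  have h4 : (l₁ ++ b :: l₂) ++ v :: l₃ = l₁ ++ b :: (l₂ ++ v :: l₃) := by simp
  rw [h4, eraseIdx_mid]

theorem getElem?_mid2 {X : Type*} (l₁ : List X) (a : X) (l₂ : List X) (b : X) (l₃ : List X) :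
    (l₁ ++ a :: (l₂ ++ b :: l₃))[l₁.length + l₂.length + 1]? = some b := by
  have h1 : l₁ ++ a :: (l₂ ++ b :: l₃) = (l₁ ++ a :: l₂) ++ b :: l₃ := by simp
  have h3 : l₁.length + l₂.length + 1 = (l₁ ++ a :: l₂).length := by simp; omega
  rw [h1, h3, getElem?_mid]

end TRC2

namespace TRC
open TRC2

/-- Decomposition-style one-step rewriting. -/
inductive D (r : Rule) : MTree → MTree → Prop where
  | root {T T'} : RootStep r T T' → D r T T'
  | cong {A A'} (Δ : List ℕ) (Γ₁ : List (ℕ × MTree)) (α : ℕ) (Γ₂ : List (ℕ × MTree)) :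
      D r A A' → D r (.node Δ (Γ₁ ++ (α, A) :: Γ₂)) (.node Δ (Γ₁ ++ (α, A') :: Γ₂))

@[simp] theorem subtree_nil (T : MTree) : T.subtree [] = T := by cases T; rfl
@[simp] theorem replace_nil (T S : MTree) : T.replace S [] = S := by cases T; rfl
@[simp] theorem isPos_nil (T : MTree) : T.IsPos [] := by cases T; trivial

theorem isPosL_elim {k : List ℕ} :
    ∀ (Γ : List (ℕ × MTree)) (i : ℕ), isPosL Γ i k →
    ∃ Γ₁ α A Γ₂, Γ = Γ₁ ++ (α, A) :: Γ₂ ∧ A.IsPos k ∧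
      (∀ d, subtreeL d Γ i k = A.subtree k) ∧
      (∀ S, replaceL Γ S i k = Γ₁ ++ (α, A.replace S k) :: Γ₂) := by
  intro Γ
  induction Γ with
  | nil => intro i h; simp [isPosL] at h
  | cons x Γ ih =>
    intro i h
    match i with
    | 0 => simp [isPosL] at h
    | 1 =>
      obtain ⟨α, A⟩ := x
      exact ⟨[], α, A, Γ, rfl, h, fun d => rfl, fun S => rfl⟩
    | n + 2 =>
      obtain ⟨Γ₁, α, A, Γ₂, rfl, hp, hs, hr⟩ := ih (n+1) h
      exact ⟨x :: Γ₁, α, A, Γ₂, rfl, hp, fun d => hs d, fun S => by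
        simp only [replaceL]; rw [hr S]; rfl⟩

theorem isPosL_intro {k : List ℕ} (Γ₁ : List (ℕ × MTree)) (α : ℕ) (A : MTree)
    (Γ₂ : List (ℕ × MTree)) (h : A.IsPos k) :
    isPosL (Γ₁ ++ (α, A) :: Γ₂) (Γ₁.length + 1) k ∧
    (∀ d, subtreeL d (Γ₁ ++ (α, A) :: Γ₂) (Γ₁.length + 1) k = A.subtree k) ∧
    (∀ S, replaceL (Γ₁ ++ (α, A) :: Γ₂) S (Γ₁.length + 1) k
      = Γ₁ ++ (α, A.replace S k) :: Γ₂) := by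
  induction Γ₁ with
  | nil => exact ⟨h, fun d => rfl, fun S => rfl⟩
  | cons x Γ₁ ih =>
    obtain ⟨h1, h2, h3⟩ := ih
    refine ⟨h1, fun d => h2 d, fun S => ?_⟩
    show x :: replaceL (Γ₁ ++ (α, A) :: Γ₂) S (Γ₁.length + 1) k = _
    rw [h3 S]; rfl

theorem D_iff_StepR {r : Rule} {T S : MTree} : D r T S ↔ StepR r T S := by
  constructor
  · intro h
    induction h with
    | root h => exact ⟨[], _, by simp, by simpa, by simp⟩
    | @cong A A' Δ Γ₁ α Γ₂ h ih =>
      obtain ⟨k, V, hpos, hroot, rfl⟩ := ih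
      obtain ⟨h1, h2, h3⟩ := isPosL_intro Γ₁ α A Γ₂ hpos
      refine ⟨(Γ₁.length + 1) :: k, V, h1, ?_, ?_⟩
      · show RootStep r (subtreeL _ (Γ₁ ++ (α, A) :: Γ₂) (Γ₁.length + 1) k) V
        rw [h2]; exact hroot
      · show _ = MTree.node Δ (replaceL (Γ₁ ++ (α, A) :: Γ₂) V (Γ₁.length + 1) k)
        rw [h3]
  · rintro ⟨k, V, hpos, hroot, rfl⟩
    induction k generalizing T with
    | nil => simp only [replace_nil]; exact D.root (by simpa using hroot)
    | cons i k ih =>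
      obtain ⟨Δ, Γ⟩ := T
      obtain ⟨Γ₁, α, A, Γ₂, rfl, hp, hs, hr⟩ := isPosL_elim Γ i hpos
      have hroot' : RootStep r (A.subtree k) V := by
        have := hs (MTree.node Δ (Γ₁ ++ (α, A) :: Γ₂)); rw [← this]; exact hroot
      have hd : D r A (A.replace V k) := ih hp hroot'
      show D r (MTree.node Δ (Γ₁ ++ (α, A) :: Γ₂))
        (MTree.node Δ (replaceL (Γ₁ ++ (α, A) :: Γ₂) V i k))
      rw [hr V]
      exact D.cong Δ Γ₁ α Γ₂ hd

end TRC

namespace TRC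
open TRC2

theorem rs_piP_iff {Δ : List ℕ} {Γ : List (ℕ × MTree)} {T' : MTree} :
    RootStep .piP (.node Δ Γ) T' ↔ ∃ x ∈ Γ, T' = MTree.node Δ (x :: Γ) := by
  constructor
  · intro h
    cases h with
    | piP hi hx => exact ⟨_, List.mem_of_getElem? hx, rfl⟩
  · rintro ⟨x, hx, rfl⟩
    obtain ⟨n, hn⟩ := List.mem_iff_getElem?.1 hx
    exact RootStep.piP (i := n + 1) (by omega) (by simpa using hn)

theorem rs_piM_iff {Δ : List ℕ} {Γ : List (ℕ × MTree)} {T' : MTree} :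
    RootStep .piM (.node Δ Γ) T' ↔
      ∃ Γ₁ x Γ₂, Γ = Γ₁ ++ x :: Γ₂ ∧ T' = MTree.node Δ (Γ₁ ++ Γ₂) := by
  constructor
  · intro h
    cases h with
    | @piM _ _ i hi h =>
      obtain ⟨x, hx⟩ : ∃ x, Γ[i-1]? = some x := ⟨_, List.getElem?_eq_getElem h⟩
      obtain ⟨Γ₁, Γ₂, rfl, hlen⟩ := getElem?_split hx
      exact ⟨Γ₁, x, Γ₂, rfl, by rw [← hlen, eraseIdx_mid]⟩
  · rintro ⟨Γ₁, x, Γ₂, rfl, rfl⟩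
    have h := RootStep.piM (Δ := Δ) (Γ := Γ₁ ++ x :: Γ₂) (i := Γ₁.length + 1)
      (by omega) (by simp)
    simp only [Nat.add_sub_cancel] at h
    rwa [eraseIdx_mid] at h

theorem rs_lam_iff {Δ : List ℕ} {Γ : List (ℕ × MTree)} {T' : MTree} :
    RootStep .lam (.node Δ Γ) T' ↔
      ∃ Γ₁ α β W Γ₂, β < α ∧ Γ = Γ₁ ++ (α, W) :: Γ₂ ∧
        T' = MTree.node Δ (Γ₁ ++ (β, W) :: Γ₂) := by
  constructor
  · intro h
    cases h with
    | lam hi hβ hΓ =>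
      obtain ⟨Γ₁, Γ₂, rfl, hlen⟩ := getElem?_split hΓ
      exact ⟨Γ₁, _, _, _, Γ₂, hβ, rfl, by rw [← hlen, set_mid]⟩
  · rintro ⟨Γ₁, α, β, W, Γ₂, hβ, rfl, rfl⟩
    have hx : (Γ₁ ++ (α, W) :: Γ₂)[Γ₁.length + 1 - 1]? = some (α, W) := by
      simpa using getElem?_mid Γ₁ (α, W) Γ₂
    have h := RootStep.lam (Δ := Δ) (i := Γ₁.length + 1) (by omega) hβ hx
    simp only [Nat.add_sub_cancel] at h
    rwa [set_mid] at h

theorem rs_four_iff {Δ : List ℕ} {Γ : List (ℕ × MTree)} {T' : MTree} :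
    RootStep .four (.node Δ Γ) T' ↔
      ∃ Γ₁ β Δt Γt W Γ₂, Γ = Γ₁ ++ (β, MTree.node Δt Γt) :: Γ₂ ∧ (β, W) ∈ Γt ∧
        T' = MTree.node Δ (Γ₁ ++ (β, W) :: Γ₂) := by
  constructor
  · intro h
    cases h with
    | four hi hj hΓ hΓt =>
      obtain ⟨Γ₁, Γ₂, rfl, hlen⟩ := getElem?_split hΓ
      exact ⟨Γ₁, _, _, _, _, Γ₂, rfl, List.mem_of_getElem? hΓt, by rw [← hlen, set_mid]⟩
  · rintro ⟨Γ₁, β, Δt, Γt, W, Γ₂, rfl, hW, rfl⟩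
    obtain ⟨n, hn⟩ := List.mem_iff_getElem?.1 hW
    have hx : (Γ₁ ++ (β, MTree.node Δt Γt) :: Γ₂)[Γ₁.length + 1 - 1]?
        = some (β, MTree.node Δt Γt) := by
      simpa using getElem?_mid Γ₁ (β, MTree.node Δt Γt) Γ₂
    have hy : Γt[n + 1 - 1]? = some (β, W) := by simpa using hn
    have h := RootStep.four (Δ := Δ) (i := Γ₁.length + 1) (j := n + 1)
      (by omega) (by omega) hx hy
    simp only [Nat.add_sub_cancel] at h
    rwa [set_mid] at h

theorem rs_jay_iff {Δ : List ℕ} {Γ : List (ℕ × MTree)} {T' : MTree} :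
    RootStep .jay (.node Δ Γ) T' ↔
      (∃ Γ₁ α Δt Γt Γ₂ β W Γ₃, β < α ∧
        Γ = Γ₁ ++ (α, MTree.node Δt Γt) :: (Γ₂ ++ (β, W) :: Γ₃) ∧
        T' = MTree.node Δ (Γ₁ ++ (α, MTree.node Δt (Γt ++ [(β, W)])) :: (Γ₂ ++ Γ₃))) ∨
      (∃ Γ₁ β W Γ₂ α Δt Γt Γ₃, β < α ∧
        Γ = Γ₁ ++ (β, W) :: (Γ₂ ++ (α, MTree.node Δt Γt) :: Γ₃) ∧
        T' = MTree.node Δ (Γ₁ ++ (Γ₂ ++ (α, MTree.node Δt (Γt ++ [(β, W)])) :: Γ₃))) := by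
  constructor
  · intro h
    cases h with
    | @jay _ _ i j α β Δt Γt W hi hj hij hβ hΓi hΓj =>
      rcases Nat.lt_or_ge (i - 1) (j - 1) with hlt | hge
      · obtain ⟨l₁, l₂, l₃, hΓ, hl1, hl2⟩ := two_getElem? hlt hΓi hΓj
        subst hΓ
        refine Or.inl ⟨l₁, α, Δt, Γt, l₂, β, W, l₃, hβ, rfl, ?_⟩
        rw [← hl2, ← hl1, set_erase_calc1]
      · have hlt : j - 1 < i - 1 := by omega
        obtain ⟨l₁, l₂, l₃, hΓ, hl1, hl2⟩ := two_getElem? hlt hΓj hΓi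
        subst hΓ
        refine Or.inr ⟨l₁, β, W, l₂, α, Δt, Γt, l₃, hβ, rfl, ?_⟩
        rw [← hl2, ← hl1, set_erase_calc2]
  · rintro (⟨Γ₁, α, Δt, Γt, Γ₂, β, W, Γ₃, hβ, rfl, rfl⟩ |
      ⟨Γ₁, β, W, Γ₂, α, Δt, Γt, Γ₃, hβ, rfl, rfl⟩)
    · have hxi : (Γ₁ ++ (α, MTree.node Δt Γt) :: (Γ₂ ++ (β, W) :: Γ₃))[Γ₁.length + 1 - 1]?
          = some (α, MTree.node Δt Γt) := by
        simpa using getElem?_mid Γ₁ _ _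
      have hxj : (Γ₁ ++ (α, MTree.node Δt Γt) :: (Γ₂ ++ (β, W) :: Γ₃))[
          Γ₁.length + Γ₂.length + 2 - 1]? = some (β, W) := by
        simpa [show Γ₁.length + Γ₂.length + 2 - 1 = Γ₁.length + Γ₂.length + 1 by omega]
          using getElem?_mid2 Γ₁ (α, MTree.node Δt Γt) Γ₂ (β, W) Γ₃
      have h := RootStep.jay (Δ := Δ) (i := Γ₁.length + 1)
        (j := Γ₁.length + Γ₂.length + 2) (by omega) (by omega) (by omega) hβ hxi hxj
      simp only [Nat.add_sub_cancel,
        show Γ₁.length + Γ₂.length + 2 - 1 = Γ₁.length + Γ₂.length + 1 by omega] at h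
      rwa [set_erase_calc1] at h
    · have hxi : (Γ₁ ++ (β, W) :: (Γ₂ ++ (α, MTree.node Δt Γt) :: Γ₃))[
          Γ₁.length + Γ₂.length + 2 - 1]? = some (α, MTree.node Δt Γt) := by
        simpa [show Γ₁.length + Γ₂.length + 2 - 1 = Γ₁.length + Γ₂.length + 1 by omega]
          using getElem?_mid2 Γ₁ (β, W) Γ₂ (α, MTree.node Δt Γt) Γ₃
      have hxj : (Γ₁ ++ (β, W) :: (Γ₂ ++ (α, MTree.node Δt Γt) :: Γ₃))[Γ₁.length + 1 - 1]?
          = some (β, W) := by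
        simpa using getElem?_mid Γ₁ _ _
      have h := RootStep.jay (Δ := Δ) (i := Γ₁.length + Γ₂.length + 2)
        (j := Γ₁.length + 1) (by omega) (by omega) (by omega) hβ hxi hxj
      simp only [Nat.add_sub_cancel,
        show Γ₁.length + Γ₂.length + 2 - 1 = Γ₁.length + Γ₂.length + 1 by omega] at h
      rwa [set_erase_calc2] at h

end TRC

namespace TRC
open TRC2 Relation

def Dec : MTree → MTree → Prop := fun a b => D .piM a b ∨ D .four a b

theorem decOf {δ : Rule} (hδ : δ = Rule.piM ∨ δ = Rule.four) {a b : MTree}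
    (h : D δ a b) : Dec a b :=
  hδ.elim (fun e => Or.inl (e ▸ h)) (fun e => Or.inr (e ▸ h))

theorem D_of_eq {r : Rule} {T U T' U' : MTree} (h : D r T U)
    (h1 : T = T') (h2 : U = U') : D r T' U' := h1 ▸ h2 ▸ h

theorem D_inv {r : Rule} {T S : MTree} (h : D r T S) :
    RootStep r T S ∨ ∃ Δ Γ₁ α A A' Γ₂, T = MTree.node Δ (Γ₁ ++ (α, A) :: Γ₂) ∧
      S = MTree.node Δ (Γ₁ ++ (α, A') :: Γ₂) ∧ D r A A' := by
  cases h with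
  | root h => exact Or.inl h
  | cong Δ Γ₁ α Γ₂ h => exact Or.inr ⟨Δ, Γ₁, _, _, _, _, rfl, rfl, h⟩

theorem dPiP {Δ : List ℕ} {Γ : List (ℕ × MTree)} {x : ℕ × MTree} (hx : x ∈ Γ) :
    D .piP (.node Δ Γ) (.node Δ (x :: Γ)) := D.root (rs_piP_iff.2 ⟨x, hx, rfl⟩)

theorem dPiM (Δ : List ℕ) (Γ₁ : List (ℕ × MTree)) (x : ℕ × MTree) (Γ₂ : List (ℕ × MTree)) :
    D .piM (.node Δ (Γ₁ ++ x :: Γ₂)) (.node Δ (Γ₁ ++ Γ₂)) :=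
  D.root (rs_piM_iff.2 ⟨Γ₁, x, Γ₂, rfl, rfl⟩)

theorem dLam (Δ : List ℕ) (Γ₁ : List (ℕ × MTree)) {α β : ℕ} (W : MTree)
    (Γ₂ : List (ℕ × MTree)) (hβ : β < α) :
    D .lam (.node Δ (Γ₁ ++ (α, W) :: Γ₂)) (.node Δ (Γ₁ ++ (β, W) :: Γ₂)) :=
  D.root (rs_lam_iff.2 ⟨Γ₁, α, β, W, Γ₂, hβ, rfl, rfl⟩)

theorem dFour (Δ : List ℕ) (Γ₁ : List (ℕ × MTree)) {β : ℕ} {Δt : List ℕ}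
    {Γt : List (ℕ × MTree)} {W : MTree} (Γ₂ : List (ℕ × MTree)) (hW : (β, W) ∈ Γt) :
    D .four (.node Δ (Γ₁ ++ (β, MTree.node Δt Γt) :: Γ₂)) (.node Δ (Γ₁ ++ (β, W) :: Γ₂)) :=
  D.root (rs_four_iff.2 ⟨Γ₁, β, Δt, Γt, W, Γ₂, rfl, hW, rfl⟩)

theorem dJay1 (Δ : List ℕ) (Γ₁ : List (ℕ × MTree)) {α : ℕ} (Δt : List ℕ)
    (Γt : List (ℕ × MTree)) (Γ₂ : List (ℕ × MTree)) {β : ℕ} (W : MTree)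
    (Γ₃ : List (ℕ × MTree)) (hβ : β < α) :
    D .jay (.node Δ (Γ₁ ++ (α, MTree.node Δt Γt) :: (Γ₂ ++ (β, W) :: Γ₃)))
      (.node Δ (Γ₁ ++ (α, MTree.node Δt (Γt ++ [(β, W)])) :: (Γ₂ ++ Γ₃))) :=
  D.root (rs_jay_iff.2 (Or.inl ⟨Γ₁, α, Δt, Γt, Γ₂, β, W, Γ₃, hβ, rfl, rfl⟩))

theorem dJay2 (Δ : List ℕ) (Γ₁ : List (ℕ × MTree)) {β : ℕ} (W : MTree)
    (Γ₂ : List (ℕ × MTree)) {α : ℕ} (Δt : List ℕ) (Γt : List (ℕ × MTree))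
    (Γ₃ : List (ℕ × MTree)) (hβ : β < α) :
    D .jay (.node Δ (Γ₁ ++ (β, W) :: (Γ₂ ++ (α, MTree.node Δt Γt) :: Γ₃)))
      (.node Δ (Γ₁ ++ (Γ₂ ++ (α, MTree.node Δt (Γt ++ [(β, W)])) :: Γ₃))) :=
  D.root (rs_jay_iff.2 (Or.inr ⟨Γ₁, β, W, Γ₂, α, Δt, Γt, Γ₃, hβ, rfl, rfl⟩))

theorem D_append {δ : Rule} (hδ : δ = Rule.piM ∨ δ = Rule.four)
    {Δ : List ℕ} {Θ L : List (ℕ × MTree)} {X : MTree}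
    (h : D δ (.node Δ Θ) X) :
    ∃ Θ', X = MTree.node Δ Θ' ∧ D δ (.node Δ (Θ ++ L)) (.node Δ (Θ' ++ L)) := by
  rcases D_inv h with hr | ⟨Δ₀, Γ₁, α, A, A', Γ₂, h1, h2, hd⟩
  · rcases hδ with rfl | rfl
    · obtain ⟨Γ₁, x, Γ₂, hΘ, rfl⟩ := rs_piM_iff.1 hr
      exact ⟨Γ₁ ++ Γ₂, rfl, D_of_eq (dPiM Δ Γ₁ x (Γ₂ ++ L)) (by simp [hΘ]) (by simp)⟩
    · obtain ⟨Γ₁, β, Δt, Γt, W, Γ₂, hΘ, hW, rfl⟩ := rs_four_iff.1 hr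
      exact ⟨Γ₁ ++ (β, W) :: Γ₂, rfl,
        D_of_eq (dFour (Δt := Δt) Δ Γ₁ (Γ₂ ++ L) hW) (by simp [hΘ]) (by simp)⟩
  · injection h1 with e1 e2
    subst e1; subst e2
    exact ⟨Γ₁ ++ (α, A') :: Γ₂, h2,
      D_of_eq (D.cong Δ Γ₁ α (Γ₂ ++ L) hd) (by simp) (by simp)⟩

theorem liftRTG {R : MTree → MTree → Prop} (Δ : List ℕ) (Γ₁ : List (ℕ × MTree))
    (α : ℕ) (Γ₂ : List (ℕ × MTree)) {A B : MTree}
    (cng : ∀ {a b}, R a b → R (.node Δ (Γ₁ ++ (α, a) :: Γ₂)) (.node Δ (Γ₁ ++ (α, b) :: Γ₂)))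
    (h : ReflTransGen R A B) :
    ReflTransGen R (.node Δ (Γ₁ ++ (α, A) :: Γ₂)) (.node Δ (Γ₁ ++ (α, B) :: Γ₂)) :=
  ReflTransGen.lift (fun X => MTree.node Δ (Γ₁ ++ (α, X) :: Γ₂)) (fun _ _ h => cng h) _ _ h

theorem decCong (Δ : List ℕ) (Γ₁ : List (ℕ × MTree)) (α : ℕ) (Γ₂ : List (ℕ × MTree))
    {a b : MTree} (h : Dec a b) :
    Dec (.node Δ (Γ₁ ++ (α, a) :: Γ₂)) (.node Δ (Γ₁ ++ (α, b) :: Γ₂)) :=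
  h.imp (D.cong Δ Γ₁ α Γ₂) (D.cong Δ Γ₁ α Γ₂)

theorem key {δ μ : Rule} (hδ : δ = .piM ∨ δ = .four)
    (hμ : μ = .piP ∨ μ = .lam ∨ μ = .jay) :
    ∀ {T U S : MTree}, D δ T U → D μ U S →
    ∃ V, ReflTransGen (D μ) T V ∧ ReflTransGen Dec V S := by
  intro T U S h1 h2
  induction h1 generalizing S with
  | @root T U hr =>
    obtain ⟨Δ, Γ⟩ := T
    rcases hδ with rfl | rfl
    · -- δ = piM
      obtain ⟨Γ₁, x, Γ₂, rfl, rfl⟩ := rs_piM_iff.1 hr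
      rcases D_inv h2 with hm | ⟨Δ', Λ₁, γ, B, B', Λ₂, hU, rfl, hB⟩
      · -- piM root, μ root
        rcases hμ with rfl | rfl | rfl
        · obtain ⟨y, hy, rfl⟩ := rs_piP_iff.1 hm
          refine ⟨.node Δ (y :: (Γ₁ ++ x :: Γ₂)), ReflTransGen.single (dPiP ?_),
            ReflTransGen.single (Or.inl (D_of_eq (dPiM Δ (y :: Γ₁) x Γ₂)
              (by simp) (by simp)))⟩
          rcases List.mem_append.1 hy with h | h
          · exact List.mem_append.2 (Or.inl h)
          · exact List.mem_append.2 (Or.inr (List.mem_cons_of_mem _ h))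
        · obtain ⟨Λ₁, a, b, W2, Λ₂, hba, hΓ, rfl⟩ := rs_lam_iff.1 hm
          rcases split_append hΓ with ⟨c, rfl, rfl⟩ | ⟨c, rfl, rfl⟩
          · exact ⟨.node Δ (Λ₁ ++ (b, W2) :: (c ++ x :: Γ₂)),
              ReflTransGen.single (D_of_eq (dLam Δ Λ₁ W2 (c ++ x :: Γ₂) hba)
                (by simp) (by simp)),
              ReflTransGen.single (Or.inl (D_of_eq (dPiM Δ (Λ₁ ++ (b, W2) :: c) x Γ₂)
                (by simp) (by simp)))⟩
          · exact ⟨.node Δ (Γ₁ ++ x :: (c ++ (b, W2) :: Λ₂)),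
              ReflTransGen.single (D_of_eq (dLam Δ (Γ₁ ++ x :: c) W2 Λ₂ hba)
                (by simp) (by simp)),
              ReflTransGen.single (Or.inl (D_of_eq (dPiM Δ Γ₁ x (c ++ (b, W2) :: Λ₂))
                (by simp) (by simp)))⟩
        · rcases rs_jay_iff.1 hm with ⟨Λ₁, a, Δi, Γi, Λ₂, b, Wq, Λ₃, hba, hΓ, rfl⟩ |
            ⟨Λ₁, b, Wq, Λ₂, a, Δi, Γi, Λ₃, hba, hΓ, rfl⟩
          · rcases split_append hΓ with ⟨c, rfl, hΛ⟩ | ⟨c, rfl, rfl⟩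
            · rcases split_append hΛ.symm with ⟨d, rfl, rfl⟩ | ⟨d, rfl, rfl⟩
              · exact ⟨.node Δ (Λ₁ ++ (a, MTree.node Δi (Γi ++ [(b, Wq)])) ::
                    (Λ₂ ++ (d ++ x :: Γ₂))),
                  ReflTransGen.single (D_of_eq (dJay1 Δ Λ₁ Δi Γi Λ₂ Wq (d ++ x :: Γ₂) hba)
                    (by simp) (by simp)),
                  ReflTransGen.single (Or.inl (D_of_eq (dPiM Δ
                    (Λ₁ ++ (a, MTree.node Δi (Γi ++ [(b, Wq)])) :: (Λ₂ ++ d)) x Γ₂)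
                    (by simp) (by simp)))⟩
              · exact ⟨.node Δ (Λ₁ ++ (a, MTree.node Δi (Γi ++ [(b, Wq)])) ::
                    ((c ++ x :: d) ++ Λ₃)),
                  ReflTransGen.single (D_of_eq (dJay1 Δ Λ₁ Δi Γi (c ++ x :: d) Wq Λ₃ hba)
                    (by simp) (by simp)),
                  ReflTransGen.single (Or.inl (D_of_eq (dPiM Δ
                    (Λ₁ ++ (a, MTree.node Δi (Γi ++ [(b, Wq)])) :: c) x (d ++ Λ₃))
                    (by simp) (by simp)))⟩
            · exact ⟨.node Δ ((Γ₁ ++ x :: c) ++ (a, MTree.node Δi (Γi ++ [(b, Wq)])) ::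
                  (Λ₂ ++ Λ₃)),
                ReflTransGen.single (D_of_eq (dJay1 Δ (Γ₁ ++ x :: c) Δi Γi Λ₂ Wq Λ₃ hba)
                  (by simp) (by simp)),
                ReflTransGen.single (Or.inl (D_of_eq (dPiM Δ Γ₁ x
                  (c ++ (a, MTree.node Δi (Γi ++ [(b, Wq)])) :: (Λ₂ ++ Λ₃)))
                  (by simp) (by simp)))⟩
          · rcases split_append hΓ with ⟨c, rfl, hΛ⟩ | ⟨c, rfl, rfl⟩
            · rcases split_append hΛ.symm with ⟨d, rfl, rfl⟩ | ⟨d, rfl, rfl⟩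
              · exact ⟨.node Δ (Λ₁ ++ (Λ₂ ++ (a, MTree.node Δi (Γi ++ [(b, Wq)])) ::
                    (d ++ x :: Γ₂))),
                  ReflTransGen.single (D_of_eq (dJay2 Δ Λ₁ Wq Λ₂ Δi Γi (d ++ x :: Γ₂) hba)
                    (by simp) (by simp)),
                  ReflTransGen.single (Or.inl (D_of_eq (dPiM Δ
                    (Λ₁ ++ Λ₂ ++ (a, MTree.node Δi (Γi ++ [(b, Wq)])) :: d) x Γ₂)
                    (by simp) (by simp)))⟩
              · exact ⟨.node Δ (Λ₁ ++ ((c ++ x :: d) ++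
                    (a, MTree.node Δi (Γi ++ [(b, Wq)])) :: Λ₃)),
                  ReflTransGen.single (D_of_eq (dJay2 Δ Λ₁ Wq (c ++ x :: d) Δi Γi Λ₃ hba)
                    (by simp) (by simp)),
                  ReflTransGen.single (Or.inl (D_of_eq (dPiM Δ (Λ₁ ++ c) x
                    (d ++ (a, MTree.node Δi (Γi ++ [(b, Wq)])) :: Λ₃))
                    (by simp) (by simp)))⟩
            · exact ⟨.node Δ ((Γ₁ ++ x :: c) ++ (Λ₂ ++
                  (a, MTree.node Δi (Γi ++ [(b, Wq)])) :: Λ₃)),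
                ReflTransGen.single (D_of_eq (dJay2 Δ (Γ₁ ++ x :: c) Wq Λ₂ Δi Γi Λ₃ hba)
                  (by simp) (by simp)),
                ReflTransGen.single (Or.inl (D_of_eq (dPiM Δ Γ₁ x
                  (c ++ (Λ₂ ++ (a, MTree.node Δi (Γi ++ [(b, Wq)])) :: Λ₃)))
                  (by simp) (by simp)))⟩
      · -- piM root, μ cong
        injection hU with e1 hL
        subst e1
        rcases split_append hL with ⟨c, rfl, rfl⟩ | ⟨c, rfl, rfl⟩
        · exact ⟨.node Δ (Λ₁ ++ (γ, B') :: (c ++ x :: Γ₂)),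
            ReflTransGen.single (D_of_eq (D.cong Δ Λ₁ γ (c ++ x :: Γ₂) hB)
              (by simp) (by simp)),
            ReflTransGen.single (Or.inl (D_of_eq (dPiM Δ (Λ₁ ++ (γ, B') :: c) x Γ₂)
              (by simp) (by simp)))⟩
        · exact ⟨.node Δ (Γ₁ ++ x :: (c ++ (γ, B') :: Λ₂)),
            ReflTransGen.single (D_of_eq (D.cong Δ (Γ₁ ++ x :: c) γ Λ₂ hB)
              (by simp) (by simp)),
            ReflTransGen.single (Or.inl (D_of_eq (dPiM Δ Γ₁ x (c ++ (γ, B') :: Λ₂))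
              (by simp) (by simp)))⟩
    · -- δ = four
      obtain ⟨Γ₁, β, Δt, Γt, W, Γ₂, rfl, hW, rfl⟩ := rs_four_iff.1 hr
      rcases D_inv h2 with hm | ⟨Δ', Λ₁, γ, B, B', Λ₂, hU, rfl, hB⟩
      · -- four root, μ root
        rcases hμ with rfl | rfl | rfl
        · -- μ = piP
          obtain ⟨y, hy, rfl⟩ := rs_piP_iff.1 hm
          rcases List.mem_append.1 hy with hy | hy
          · exact ⟨.node Δ (y :: (Γ₁ ++ (β, MTree.node Δt Γt) :: Γ₂)),
              ReflTransGen.single (dPiP (List.mem_append.2 (Or.inl hy))),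
              ReflTransGen.single (Or.inr (D_of_eq (dFour (Δt := Δt) Δ (y :: Γ₁) Γ₂ hW)
                (by simp) (by simp)))⟩
          · rcases List.mem_cons.1 hy with rfl | hy
            · refine ⟨.node Δ ((β, MTree.node Δt Γt) :: (Γ₁ ++ (β, MTree.node Δt Γt) :: Γ₂)),
                ReflTransGen.single (dPiP (List.mem_append.2 (Or.inr
                  List.mem_cons_self))), ?_⟩
              have s1 : Dec
                  (MTree.node Δ ((β, MTree.node Δt Γt) :: (Γ₁ ++ (β, MTree.node Δt Γt) :: Γ₂)))
                  (MTree.node Δ ((β, W) :: (Γ₁ ++ (β, MTree.node Δt Γt) :: Γ₂))) :=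
                Or.inr (D_of_eq (dFour (Δt := Δt) Δ []
                  (Γ₁ ++ (β, MTree.node Δt Γt) :: Γ₂) hW) (by simp) (by simp))
              have s2 : Dec
                  (MTree.node Δ ((β, W) :: (Γ₁ ++ (β, MTree.node Δt Γt) :: Γ₂)))
                  (MTree.node Δ ((β, W) :: (Γ₁ ++ (β, W) :: Γ₂))) :=
                Or.inr (D_of_eq (dFour (Δt := Δt) Δ ((β, W) :: Γ₁) Γ₂ hW)
                  (by simp) (by simp))
              exact ReflTransGen.head s1 (ReflTransGen.single s2)
            · exact ⟨.node Δ (y :: (Γ₁ ++ (β, MTree.node Δt Γt) :: Γ₂)),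
                ReflTransGen.single (dPiP (List.mem_append.2 (Or.inr
                  (List.mem_cons_of_mem _ hy)))),
                ReflTransGen.single (Or.inr (D_of_eq (dFour (Δt := Δt) Δ (y :: Γ₁) Γ₂ hW)
                  (by simp) (by simp)))⟩
        · -- μ = lam
          obtain ⟨Λ₁, a, b, W2, Λ₂, hba, hL, rfl⟩ := rs_lam_iff.1 hm
          rcases two_pos hL with ⟨rfl, he, rfl⟩ | ⟨c, rfl, rfl⟩ | ⟨c, rfl, rfl⟩
          · injection he with e2 e3
            subst e2; subst e3
            obtain ⟨Θ₁, Θ₂, rfl⟩ := List.append_of_mem hW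
            refine ⟨.node Δ (Γ₁ ++ (b, MTree.node Δt (Θ₁ ++ (b, W) :: Θ₂)) :: Γ₂),
              ReflTransGen.head (dLam Δ Γ₁ (MTree.node Δt (Θ₁ ++ (β, W) :: Θ₂)) Γ₂ hba)
                (ReflTransGen.single (D.cong Δ Γ₁ b Γ₂ (dLam Δt Θ₁ W Θ₂ hba))),
              ReflTransGen.single (Or.inr (dFour Δ Γ₁ Γ₂
                (show ((b : ℕ), W) ∈ Θ₁ ++ (b, W) :: Θ₂ by simp)))⟩
          · exact ⟨.node Δ (Γ₁ ++ (β, MTree.node Δt Γt) :: (c ++ (b, W2) :: Λ₂)),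
              ReflTransGen.single (D_of_eq (dLam Δ (Γ₁ ++ (β, MTree.node Δt Γt) :: c)
                W2 Λ₂ hba) (by simp) (by simp)),
              ReflTransGen.single (Or.inr (D_of_eq (dFour (Δt := Δt) Δ Γ₁
                (c ++ (b, W2) :: Λ₂) hW) (by simp) (by simp)))⟩
          · exact ⟨.node Δ (Λ₁ ++ (b, W2) :: (c ++ (β, MTree.node Δt Γt) :: Γ₂)),
              ReflTransGen.single (D_of_eq (dLam Δ Λ₁ W2
                (c ++ (β, MTree.node Δt Γt) :: Γ₂) hba) (by simp) (by simp)),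
              ReflTransGen.single (Or.inr (D_of_eq (dFour (Δt := Δt) Δ
                (Λ₁ ++ (b, W2) :: c) Γ₂ hW) (by simp) (by simp)))⟩
        · -- μ = jay
          rcases rs_jay_iff.1 hm with ⟨Λ₁, a, Δi, Γi, Λ₂, b, Wq, Λ₃, hba, hL, rfl⟩ |
            ⟨Λ₁, b, Wq, Λ₂, a, Δi, Γi, Λ₃, hba, hL, rfl⟩
          · -- orientation 1 : i-element before j-element
            rcases two_pos hL with ⟨rfl, he, rfl⟩ | ⟨c, rfl, rfl⟩ | ⟨c, rfl, hM⟩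
            · -- ours = i-element
              injection he with e2 e3
              subst e2; subst e3
              obtain ⟨Θ₁, Θ₂, rfl⟩ := List.append_of_mem hW
              refine ⟨.node Δ (Γ₁ ++ (β, MTree.node Δt
                  (Θ₁ ++ (β, MTree.node Δi (Γi ++ [(b, Wq)])) :: Θ₂)) :: (Λ₂ ++ Λ₃)),
                ReflTransGen.head (dJay1 Δ Γ₁ Δt (Θ₁ ++ (β, MTree.node Δi Γi) :: Θ₂)
                    Λ₂ Wq Λ₃ hba)
                  (ReflTransGen.single (D_of_eq (D.cong Δ Γ₁ β (Λ₂ ++ Λ₃)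
                    (dJay1 Δt Θ₁ Δi Γi Θ₂ Wq [] hba)) (by simp) (by simp))),
                ReflTransGen.single (Or.inr (dFour Δ Γ₁ (Λ₂ ++ Λ₃)
                  (show ((β : ℕ), MTree.node Δi (Γi ++ [(b, Wq)])) ∈
                    Θ₁ ++ (β, MTree.node Δi (Γi ++ [(b, Wq)])) :: Θ₂ by simp)))⟩
            · -- ours strictly left of the i-element
              exact ⟨.node Δ (Γ₁ ++ (β, MTree.node Δt Γt) ::
                  (c ++ (a, MTree.node Δi (Γi ++ [(b, Wq)])) :: (Λ₂ ++ Λ₃))),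
                ReflTransGen.single (D_of_eq (dJay1 Δ (Γ₁ ++ (β, MTree.node Δt Γt) :: c)
                  Δi Γi Λ₂ Wq Λ₃ hba) (by simp) (by simp)),
                ReflTransGen.single (Or.inr (D_of_eq (dFour (Δt := Δt) Δ Γ₁
                  (c ++ (a, MTree.node Δi (Γi ++ [(b, Wq)])) :: (Λ₂ ++ Λ₃)) hW)
                  (by simp) (by simp)))⟩
            · -- ours strictly right of the i-element
              rcases two_pos hM with ⟨rfl, he, rfl⟩ | ⟨d, rfl, rfl⟩ | ⟨d, rfl, rfl⟩
              · -- ours = j-element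
                injection he with e2 e3
                subst e2; subst e3
                refine ⟨.node Δ (Λ₁ ++ (a, MTree.node Δi
                    (Γi ++ [(b, MTree.node Δt Γt)])) :: (Λ₂ ++ Λ₃)),
                  ReflTransGen.single (D_of_eq (dJay1 Δ Λ₁ Δi Γi Λ₂ (MTree.node Δt Γt)
                    Λ₃ hba) (by simp) (by simp)),
                  ReflTransGen.single (Or.inr (D_of_eq (D.cong Δ Λ₁ a (Λ₂ ++ Λ₃)
                    (dFour (Δt := Δt) Δi Γi [] hW)) (by simp) (by simp)))⟩
              · -- ours right of both
                exact ⟨.node Δ (Λ₁ ++ (a, MTree.node Δi (Γi ++ [(b, Wq)])) ::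
                    (Λ₂ ++ (d ++ (β, MTree.node Δt Γt) :: Γ₂))),
                  ReflTransGen.single (D_of_eq (dJay1 Δ Λ₁ Δi Γi Λ₂ Wq
                    (d ++ (β, MTree.node Δt Γt) :: Γ₂) hba) (by simp) (by simp)),
                  ReflTransGen.single (Or.inr (D_of_eq (dFour (Δt := Δt) Δ
                    (Λ₁ ++ (a, MTree.node Δi (Γi ++ [(b, Wq)])) :: (Λ₂ ++ d)) Γ₂ hW)
                    (by simp) (by simp)))⟩
              · -- ours between them
                exact ⟨.node Δ (Λ₁ ++ (a, MTree.node Δi (Γi ++ [(b, Wq)])) ::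
                    ((c ++ (β, MTree.node Δt Γt) :: d) ++ Λ₃)),
                  ReflTransGen.single (D_of_eq (dJay1 Δ Λ₁ Δi Γi
                    (c ++ (β, MTree.node Δt Γt) :: d) Wq Λ₃ hba) (by simp) (by simp)),
                  ReflTransGen.single (Or.inr (D_of_eq (dFour (Δt := Δt) Δ
                    (Λ₁ ++ (a, MTree.node Δi (Γi ++ [(b, Wq)])) :: c) (d ++ Λ₃) hW)
                    (by simp) (by simp)))⟩
          · -- orientation 2 : j-element before i-element
            rcases two_pos hL with ⟨rfl, he, rfl⟩ | ⟨c, rfl, rfl⟩ | ⟨c, rfl, hM⟩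
            · -- ours = j-element
              injection he with e2 e3
              subst e2; subst e3
              refine ⟨.node Δ (Γ₁ ++ (Λ₂ ++ (a, MTree.node Δi
                  (Γi ++ [(β, MTree.node Δt Γt)])) :: Λ₃)),
                ReflTransGen.single (dJay2 Δ Γ₁ (MTree.node Δt Γt) Λ₂ Δi Γi Λ₃ hba),
                ReflTransGen.single (Or.inr (D_of_eq (D.cong Δ (Γ₁ ++ Λ₂) a Λ₃
                  (dFour (Δt := Δt) Δi Γi [] hW)) (by simp) (by simp)))⟩
            · -- ours strictly left of the j-element
              exact ⟨.node Δ (Γ₁ ++ (β, MTree.node Δt Γt) ::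
                  (c ++ (Λ₂ ++ (a, MTree.node Δi (Γi ++ [(b, Wq)])) :: Λ₃))),
                ReflTransGen.single (D_of_eq (dJay2 Δ (Γ₁ ++ (β, MTree.node Δt Γt) :: c)
                  Wq Λ₂ Δi Γi Λ₃ hba) (by simp) (by simp)),
                ReflTransGen.single (Or.inr (D_of_eq (dFour (Δt := Δt) Δ Γ₁
                  (c ++ (Λ₂ ++ (a, MTree.node Δi (Γi ++ [(b, Wq)])) :: Λ₃)) hW)
                  (by simp) (by simp)))⟩
            · -- ours strictly right of the j-element
              rcases two_pos hM with ⟨rfl, he, rfl⟩ | ⟨d, rfl, rfl⟩ | ⟨d, rfl, rfl⟩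
              · -- ours = i-element
                injection he with e2 e3
                subst e2; subst e3
                obtain ⟨Θ₁, Θ₂, rfl⟩ := List.append_of_mem hW
                refine ⟨.node Δ (Λ₁ ++ (Λ₂ ++ (a, MTree.node Δt
                    (Θ₁ ++ (a, MTree.node Δi (Γi ++ [(b, Wq)])) :: Θ₂)) :: Λ₃)), ?_, ?_⟩
                · have s1 : D Rule.jay
                      (MTree.node Δ (Λ₁ ++ (b, Wq) :: Λ₂ ++
                        (a, MTree.node Δt (Θ₁ ++ (a, MTree.node Δi Γi) :: Θ₂)) :: Λ₃))
                      (MTree.node Δ (Λ₁ ++ (Λ₂ ++ (a, MTree.node Δt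
                        ((Θ₁ ++ (a, MTree.node Δi Γi) :: Θ₂) ++ [(b, Wq)])) :: Λ₃))) :=
                    D_of_eq (dJay2 Δ Λ₁ Wq Λ₂ Δt
                      (Θ₁ ++ (a, MTree.node Δi Γi) :: Θ₂) Λ₃ hba) (by simp) rfl
                  have s2 : D Rule.jay
                      (MTree.node Δ (Λ₁ ++ (Λ₂ ++ (a, MTree.node Δt
                        ((Θ₁ ++ (a, MTree.node Δi Γi) :: Θ₂) ++ [(b, Wq)])) :: Λ₃)))
                      (MTree.node Δ (Λ₁ ++ (Λ₂ ++ (a, MTree.node Δt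
                        (Θ₁ ++ (a, MTree.node Δi (Γi ++ [(b, Wq)])) :: Θ₂)) :: Λ₃))) :=
                    D_of_eq (D.cong Δ (Λ₁ ++ Λ₂) a Λ₃
                      (dJay1 Δt Θ₁ Δi Γi Θ₂ Wq [] hba)) (by simp) (by simp)
                  exact ReflTransGen.head s1 (ReflTransGen.single s2)
                · exact ReflTransGen.single (Or.inr (D_of_eq (dFour (Δt := Δt) Δ
                    (Λ₁ ++ Λ₂) Λ₃
                    (show ((a : ℕ), MTree.node Δi (Γi ++ [(b, Wq)])) ∈
                      Θ₁ ++ (a, MTree.node Δi (Γi ++ [(b, Wq)])) :: Θ₂ by simp))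
                    (by simp) (by simp)))
              · -- ours right of both
                exact ⟨.node Δ (Λ₁ ++ (Λ₂ ++ (a, MTree.node Δi (Γi ++ [(b, Wq)])) ::
                    (d ++ (β, MTree.node Δt Γt) :: Γ₂))),
                  ReflTransGen.single (D_of_eq (dJay2 Δ Λ₁ Wq Λ₂ Δi Γi
                    (d ++ (β, MTree.node Δt Γt) :: Γ₂) hba) (by simp) (by simp)),
                  ReflTransGen.single (Or.inr (D_of_eq (dFour (Δt := Δt) Δ
                    (Λ₁ ++ Λ₂ ++ (a, MTree.node Δi (Γi ++ [(b, Wq)])) :: d) Γ₂ hW)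
                    (by simp) (by simp)))⟩
              · -- ours between them
                exact ⟨.node Δ (Λ₁ ++ ((c ++ (β, MTree.node Δt Γt) :: d) ++
                    (a, MTree.node Δi (Γi ++ [(b, Wq)])) :: Λ₃)),
                  ReflTransGen.single (D_of_eq (dJay2 Δ Λ₁ Wq
                    (c ++ (β, MTree.node Δt Γt) :: d) Δi Γi Λ₃ hba) (by simp) (by simp)),
                  ReflTransGen.single (Or.inr (D_of_eq (dFour (Δt := Δt) Δ (Λ₁ ++ c)
                    (d ++ (a, MTree.node Δi (Γi ++ [(b, Wq)])) :: Λ₃) hW)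
                    (by simp) (by simp)))⟩
      · -- four root, μ cong
        injection hU with e1 hL
        subst e1
        rcases two_pos hL with ⟨rfl, he, rfl⟩ | ⟨c, rfl, rfl⟩ | ⟨c, rfl, rfl⟩
        · injection he with e2 e3
          subst e2; subst e3
          obtain ⟨Θ₁, Θ₂, rfl⟩ := List.append_of_mem hW
          exact ⟨.node Δ (Γ₁ ++ (β, MTree.node Δt (Θ₁ ++ (β, B') :: Θ₂)) :: Γ₂),
            ReflTransGen.single (D.cong Δ Γ₁ β Γ₂ (D.cong Δt Θ₁ β Θ₂ hB)),
            ReflTransGen.single (Or.inr (dFour Δ Γ₁ Γ₂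
              (show ((β : ℕ), B') ∈ Θ₁ ++ (β, B') :: Θ₂ by simp)))⟩
        · exact ⟨.node Δ (Γ₁ ++ (β, MTree.node Δt Γt) :: (c ++ (γ, B') :: Λ₂)),
            ReflTransGen.single (D_of_eq (D.cong Δ (Γ₁ ++ (β, MTree.node Δt Γt) :: c) γ Λ₂ hB)
              (by simp) (by simp)),
            ReflTransGen.single (Or.inr (D_of_eq (dFour (Δt := Δt) Δ Γ₁
              (c ++ (γ, B') :: Λ₂) hW) (by simp) (by simp)))⟩
        · exact ⟨.node Δ (Λ₁ ++ (γ, B') :: (c ++ (β, MTree.node Δt Γt) :: Γ₂)),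
            ReflTransGen.single (D_of_eq (D.cong Δ Λ₁ γ (c ++ (β, MTree.node Δt Γt) :: Γ₂) hB)
              (by simp) (by simp)),
            ReflTransGen.single (Or.inr (D_of_eq (dFour (Δt := Δt) Δ (Λ₁ ++ (γ, B') :: c)
              Γ₂ hW) (by simp) (by simp)))⟩
  | @cong A A' Δ Γ₁ α Γ₂ hA ih =>
    rcases D_inv h2 with hm | ⟨Δ', Λ₁, γ, B, B', Λ₂, hU, rfl, hB⟩
    · -- cong δ, μ root
      rcases hμ with rfl | rfl | rfl
      · -- μ = piP
        obtain ⟨y, hy, rfl⟩ := rs_piP_iff.1 hm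
        rcases List.mem_append.1 hy with hy | hy
        · exact ⟨.node Δ (y :: (Γ₁ ++ (α, A) :: Γ₂)),
            ReflTransGen.single (dPiP (List.mem_append.2 (Or.inl hy))),
            ReflTransGen.single (decOf hδ (D_of_eq (D.cong Δ (y :: Γ₁) α Γ₂ hA)
              (by simp) (by simp)))⟩
        · rcases List.mem_cons.1 hy with rfl | hy
          · refine ⟨.node Δ ((α, A) :: (Γ₁ ++ (α, A) :: Γ₂)),
              ReflTransGen.single (dPiP (List.mem_append.2 (Or.inr
                List.mem_cons_self))), ?_⟩
            have s1 : Dec (MTree.node Δ ((α, A) :: (Γ₁ ++ (α, A) :: Γ₂)))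
                (MTree.node Δ ((α, A') :: (Γ₁ ++ (α, A) :: Γ₂))) :=
              decOf hδ (D_of_eq (D.cong Δ [] α (Γ₁ ++ (α, A) :: Γ₂) hA)
                (by simp) (by simp))
            have s2 : Dec (MTree.node Δ ((α, A') :: (Γ₁ ++ (α, A) :: Γ₂)))
                (MTree.node Δ ((α, A') :: (Γ₁ ++ (α, A') :: Γ₂))) :=
              decOf hδ (D_of_eq (D.cong Δ ((α, A') :: Γ₁) α Γ₂ hA)
                (by simp) (by simp))
            exact ReflTransGen.head s1 (ReflTransGen.single s2)
          · exact ⟨.node Δ (y :: (Γ₁ ++ (α, A) :: Γ₂)),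
              ReflTransGen.single (dPiP (List.mem_append.2 (Or.inr
                (List.mem_cons_of_mem _ hy)))),
              ReflTransGen.single (decOf hδ (D_of_eq (D.cong Δ (y :: Γ₁) α Γ₂ hA)
                (by simp) (by simp)))⟩
      · -- μ = lam
        obtain ⟨Λ₁, a, b, W2, Λ₂, hba, hL, rfl⟩ := rs_lam_iff.1 hm
        rcases two_pos hL with ⟨rfl, he, rfl⟩ | ⟨c, rfl, rfl⟩ | ⟨c, rfl, rfl⟩
        · injection he with e2 e3
          subst e2; subst e3
          exact ⟨.node Δ (Γ₁ ++ (b, A) :: Γ₂),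
            ReflTransGen.single (dLam Δ Γ₁ A Γ₂ hba),
            ReflTransGen.single (decOf hδ (D.cong Δ Γ₁ b Γ₂ hA))⟩
        · exact ⟨.node Δ (Γ₁ ++ (α, A) :: (c ++ (b, W2) :: Λ₂)),
            ReflTransGen.single (D_of_eq (dLam Δ (Γ₁ ++ (α, A) :: c) W2 Λ₂ hba)
              (by simp) (by simp)),
            ReflTransGen.single (decOf hδ (D_of_eq (D.cong Δ Γ₁ α
              (c ++ (b, W2) :: Λ₂) hA) (by simp) (by simp)))⟩
        · exact ⟨.node Δ (Λ₁ ++ (b, W2) :: (c ++ (α, A) :: Γ₂)),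
            ReflTransGen.single (D_of_eq (dLam Δ Λ₁ W2 (c ++ (α, A) :: Γ₂) hba)
              (by simp) (by simp)),
            ReflTransGen.single (decOf hδ (D_of_eq (D.cong Δ (Λ₁ ++ (b, W2) :: c) α Γ₂ hA)
              (by simp) (by simp)))⟩
      · -- μ = jay
        rcases rs_jay_iff.1 hm with ⟨Λ₁, a, Δi, Γi, Λ₂, b, Wq, Λ₃, hba, hL, rfl⟩ |
          ⟨Λ₁, b, Wq, Λ₂, a, Δi, Γi, Λ₃, hba, hL, rfl⟩
        · -- orientation 1
          rcases two_pos hL with ⟨rfl, he, rfl⟩ | ⟨c, rfl, rfl⟩ | ⟨c, rfl, hM⟩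
          · -- ours = i-element
            injection he with e2 e3
            subst e2; subst e3
            obtain ⟨ΔA, ΓA⟩ := A
            obtain ⟨Θ', hX, hD⟩ := D_append (L := [(b, Wq)]) hδ hA
            injection hX with e1 e2
            subst e1; subst e2
            exact ⟨.node Δ (Γ₁ ++ (α, MTree.node Δi (ΓA ++ [(b, Wq)])) :: (Λ₂ ++ Λ₃)),
              ReflTransGen.single (dJay1 Δ Γ₁ Δi ΓA Λ₂ Wq Λ₃ hba),
              ReflTransGen.single (decOf hδ (D.cong Δ Γ₁ α (Λ₂ ++ Λ₃) hD))⟩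
          · -- ours left of the i-element
            exact ⟨.node Δ (Γ₁ ++ (α, A) ::
                (c ++ (a, MTree.node Δi (Γi ++ [(b, Wq)])) :: (Λ₂ ++ Λ₃))),
              ReflTransGen.single (D_of_eq (dJay1 Δ (Γ₁ ++ (α, A) :: c) Δi Γi Λ₂ Wq Λ₃
                hba) (by simp) (by simp)),
              ReflTransGen.single (decOf hδ (D_of_eq (D.cong Δ Γ₁ α
                (c ++ (a, MTree.node Δi (Γi ++ [(b, Wq)])) :: (Λ₂ ++ Λ₃)) hA)
                (by simp) (by simp)))⟩
          · -- ours right of the i-element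
            rcases two_pos hM with ⟨rfl, he, rfl⟩ | ⟨d, rfl, rfl⟩ | ⟨d, rfl, rfl⟩
            · -- ours = j-element
              injection he with e2 e3
              subst e2; subst e3
              exact ⟨.node Δ (Λ₁ ++ (a, MTree.node Δi (Γi ++ [(b, A)])) :: (Λ₂ ++ Λ₃)),
                ReflTransGen.single (D_of_eq (dJay1 Δ Λ₁ Δi Γi Λ₂ A Λ₃ hba)
                  (by simp) (by simp)),
                ReflTransGen.single (decOf hδ (D_of_eq (D.cong Δ Λ₁ a (Λ₂ ++ Λ₃)
                  (D.cong Δi Γi b [] hA)) (by simp) (by simp)))⟩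
            · -- ours right of both
              exact ⟨.node Δ (Λ₁ ++ (a, MTree.node Δi (Γi ++ [(b, Wq)])) ::
                  (Λ₂ ++ (d ++ (α, A) :: Γ₂))),
                ReflTransGen.single (D_of_eq (dJay1 Δ Λ₁ Δi Γi Λ₂ Wq
                  (d ++ (α, A) :: Γ₂) hba) (by simp) (by simp)),
                ReflTransGen.single (decOf hδ (D_of_eq (D.cong Δ
                  (Λ₁ ++ (a, MTree.node Δi (Γi ++ [(b, Wq)])) :: (Λ₂ ++ d)) α Γ₂ hA)
                  (by simp) (by simp)))⟩
            · -- ours between them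
              exact ⟨.node Δ (Λ₁ ++ (a, MTree.node Δi (Γi ++ [(b, Wq)])) ::
                  ((c ++ (α, A) :: d) ++ Λ₃)),
                ReflTransGen.single (D_of_eq (dJay1 Δ Λ₁ Δi Γi (c ++ (α, A) :: d) Wq Λ₃
                  hba) (by simp) (by simp)),
                ReflTransGen.single (decOf hδ (D_of_eq (D.cong Δ
                  (Λ₁ ++ (a, MTree.node Δi (Γi ++ [(b, Wq)])) :: c) α (d ++ Λ₃) hA)
                  (by simp) (by simp)))⟩
        · -- orientation 2
          rcases two_pos hL with ⟨rfl, he, rfl⟩ | ⟨c, rfl, rfl⟩ | ⟨c, rfl, hM⟩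
          · -- ours = j-element
            injection he with e2 e3
            subst e2; subst e3
            exact ⟨.node Δ (Γ₁ ++ (Λ₂ ++ (a, MTree.node Δi (Γi ++ [(α, A)])) :: Λ₃)),
              ReflTransGen.single (dJay2 Δ Γ₁ A Λ₂ Δi Γi Λ₃ hba),
              ReflTransGen.single (decOf hδ (D_of_eq (D.cong Δ (Γ₁ ++ Λ₂) a Λ₃
                (D.cong Δi Γi α [] hA)) (by simp) (by simp)))⟩
          · -- ours left of the j-element
            exact ⟨.node Δ (Γ₁ ++ (α, A) ::
                (c ++ (Λ₂ ++ (a, MTree.node Δi (Γi ++ [(b, Wq)])) :: Λ₃))),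
              ReflTransGen.single (D_of_eq (dJay2 Δ (Γ₁ ++ (α, A) :: c) Wq Λ₂ Δi Γi Λ₃
                hba) (by simp) (by simp)),
              ReflTransGen.single (decOf hδ (D_of_eq (D.cong Δ Γ₁ α
                (c ++ (Λ₂ ++ (a, MTree.node Δi (Γi ++ [(b, Wq)])) :: Λ₃)) hA)
                (by simp) (by simp)))⟩
          · -- ours right of the j-element
            rcases two_pos hM with ⟨rfl, he, rfl⟩ | ⟨d, rfl, rfl⟩ | ⟨d, rfl, rfl⟩
            · -- ours = i-element
              injection he with e2 e3
              subst e2; subst e3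
              obtain ⟨ΔA, ΓA⟩ := A
              obtain ⟨Θ', hX, hD⟩ := D_append (L := [(b, Wq)]) hδ hA
              injection hX with e1 e2
              subst e1; subst e2
              exact ⟨.node Δ (Λ₁ ++ (Λ₂ ++ (a, MTree.node Δi (ΓA ++ [(b, Wq)])) :: Λ₃)),
                ReflTransGen.single (D_of_eq (dJay2 Δ Λ₁ Wq Λ₂ Δi ΓA Λ₃ hba)
                  (by simp) (by simp)),
                ReflTransGen.single (decOf hδ (D_of_eq (D.cong Δ (Λ₁ ++ Λ₂) a Λ₃ hD)
                  (by simp) (by simp)))⟩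
            · -- ours right of both
              exact ⟨.node Δ (Λ₁ ++ (Λ₂ ++ (a, MTree.node Δi (Γi ++ [(b, Wq)])) ::
                  (d ++ (α, A) :: Γ₂))),
                ReflTransGen.single (D_of_eq (dJay2 Δ Λ₁ Wq Λ₂ Δi Γi
                  (d ++ (α, A) :: Γ₂) hba) (by simp) (by simp)),
                ReflTransGen.single (decOf hδ (D_of_eq (D.cong Δ
                  (Λ₁ ++ Λ₂ ++ (a, MTree.node Δi (Γi ++ [(b, Wq)])) :: d) α Γ₂ hA)
                  (by simp) (by simp)))⟩
            · -- ours between them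
              exact ⟨.node Δ (Λ₁ ++ ((c ++ (α, A) :: d) ++
                  (a, MTree.node Δi (Γi ++ [(b, Wq)])) :: Λ₃)),
                ReflTransGen.single (D_of_eq (dJay2 Δ Λ₁ Wq (c ++ (α, A) :: d) Δi Γi Λ₃
                  hba) (by simp) (by simp)),
                ReflTransGen.single (decOf hδ (D_of_eq (D.cong Δ (Λ₁ ++ c) α
                  (d ++ (a, MTree.node Δi (Γi ++ [(b, Wq)])) :: Λ₃) hA)
                  (by simp) (by simp)))⟩
    · -- cong δ, cong μ
      injection hU with e1 hL
      subst e1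
      rcases two_pos hL with ⟨rfl, he, rfl⟩ | ⟨c, rfl, rfl⟩ | ⟨c, rfl, rfl⟩
      · injection he with e2 e3
        subst e2; subst e3
        obtain ⟨V₀, hv1, hv2⟩ := ih hB
        exact ⟨.node Δ (Γ₁ ++ (α, V₀) :: Γ₂),
          liftRTG Δ Γ₁ α Γ₂ (D.cong Δ Γ₁ α Γ₂) hv1,
          liftRTG Δ Γ₁ α Γ₂ (decCong Δ Γ₁ α Γ₂) hv2⟩
      · -- (γ,B) strictly right of (α,A')
        refine ⟨.node Δ (Γ₁ ++ (α, A) :: (c ++ (γ, B') :: Λ₂)), ReflTransGen.single ?_,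
          ReflTransGen.single ?_⟩
        · exact D_of_eq (D.cong Δ (Γ₁ ++ (α, A) :: c) γ Λ₂ hB) (by simp) (by simp)
        · exact decOf hδ (D_of_eq (D.cong Δ Γ₁ α (c ++ (γ, B') :: Λ₂) hA) (by simp) (by simp))
      · -- (γ,B) strictly left of (α,A')
        refine ⟨.node Δ (Λ₁ ++ (γ, B') :: (c ++ (α, A) :: Γ₂)), ReflTransGen.single ?_,
          ReflTransGen.single ?_⟩
        · exact D_of_eq (D.cong Δ Λ₁ γ (c ++ (α, A) :: Γ₂) hB) (by simp) (by simp)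
        · exact decOf hδ (D_of_eq (D.cong Δ (Λ₁ ++ (γ, B') :: c) α Γ₂ hA) (by simp) (by simp))

end TRC

/-- a decreasing step followed by a `μ`-step (`μ ∈ {π⁺, λ, J}`)
can be replaced by finitely many `μ`-steps followed by finitely many
decreasing steps. -/
theorem decreasing_permutation (δ μ : TRC.Rule)
    (hδ : δ = TRC.Rule.piM ∨ δ = TRC.Rule.four)
    (hμ : μ = TRC.Rule.piP ∨ μ = TRC.Rule.lam ∨ μ = TRC.Rule.jay)
    (T S : TRC.MTree) (h : ∃ U, TRC.StepR δ T U ∧ TRC.StepR μ U S) :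
    ∃ U, Relation.ReflTransGen (TRC.StepR μ) T U ∧
      Relation.ReflTransGen TRC.DecreasingStep U S := by
  obtain ⟨U, h1, h2⟩ := h
  obtain ⟨V, hv1, hv2⟩ := TRC.key hδ hμ (TRC.D_iff_StepR.2 h1) (TRC.D_iff_StepR.2 h2)
  refine ⟨V, ?_, ?_⟩
  · exact Relation.ReflTransGen.mono (fun a b hab => TRC.D_iff_StepR.1 hab) _ _ hv1
  · exact Relation.ReflTransGen.mono
      (fun a b (hab : TRC.Dec a b) => hab.imp (fun h => TRC.D_iff_StepR.1 h) (fun h => TRC.D_iff_StepR.1 h))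
      _ _ hv2
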